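/- If a conjunct ψ of HML_srbb distinguishes a process p from a process q (with respect to ⟦·⟧^∧), then expr^∧(ψ) ∈ Win_a([p,q]^∧_a) in the weak spectroscopy energy game G△. -/

import Mathlib

open Classical

noncomputable section

namespace Spectroscopy

/-! ### Energies and declining energy games -/

/-- Energies: 8-dimensional vectors over `ℕ ∪ {∞}`, ordered componentwise. -/
abbrev Energy : Type := Fin 8 → ℕ∞

/-- The `i`-th unit vector. -/
def unitE (i : Fin 8) : Energy := fun k => if k = i then 1 else 0

/-- The vector with value `v` at position `i` and `0` elsewhere. -/
def onlyAt (i : Fin 8) (v : ℕ∞) : Energy := fun k => if k = i then v else 0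

/-- Components of energy updates: `-1`, `0`, or minimum selection `min_D`.
For the component at position `k`, `minWith D` selects the minimum over the
positions `{k} ∪ D`, so the requirement `k ∈ D` of the paper holds by
construction. -/
inductive UpdComp : Type
  | decr : UpdComp
  | zero : UpdComp
  | minWith (D : Finset (Fin 8)) : UpdComp
deriving DecidableEq

/-- Energy updates. -/
abbrev Update : Type := Fin 8 → UpdComp

/-- Partial application of an update to an energy (`none` when a component
would become negative). -/
def upd (e : Energy) (u : Update) : Option Energy :=
  if ∀ k, u k = UpdComp.decr → e k ≠ 0 then
    some (fun k =>
      match u k with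
      | UpdComp.decr => e k - 1
      | UpdComp.zero => e k
      | UpdComp.minWith D => (insert k D).inf e)
  else none

/-- A declining energy game: positions, a defender predicate (attacker
positions are the non-defender ones), and moves labeled with updates. -/
structure EGame (Pos : Type) where
  defender : Pos → Prop
  move : Pos → Update → Pos → Prop

/-- Attacker winning budgets `Win_a`: at an attacker position some move must
lead to an attacker-won position under the updated energy; at a defender
position every move must (be defined and) lead to an attacker-won position. -/
inductive EGame.Win {Pos : Type} (G : EGame Pos) : Pos → Energy → Prop
  | attack {g : Pos} {u : Update} {g' : Pos} {e e' : Energy} :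
      ¬ G.defender g → G.move g u g' → upd e u = some e' → G.Win g' e' →
      G.Win g e
  | defend {g : Pos} {e : Energy} :
      G.defender g →
      (∀ u g', G.move g u g' → upd e u ≠ none) →
      (∀ u g' e', G.move g u g' → upd e u = some e' → G.Win g' e') →
      G.Win g e

/-! ### Labeled transition systems with silent steps -/

section LTS

variable {Proc Act : Type}

/-- Weak internal steps `↠`: reflexive-transitive closure of `τ`-steps. -/
def Star (Tr : Proc → Act → Proc → Prop) (τ : Act) : Proc → Proc → Prop :=
  Relation.ReflTransGen fun p p' => Tr p τ p'

/-- A process is stable if it has no `τ`-step. -/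
def Stable (Tr : Proc → Act → Proc → Prop) (τ : Act) (p : Proc) : Prop :=
  ∀ p', ¬ Tr p τ p'

/-- Optional step `p →(α) p'`: a real `α`-step, or `α = τ` and `p = p'`. -/
def OptStep (Tr : Proc → Act → Proc → Prop) (τ : Act) (p : Proc) (α : Act) (p' : Proc) : Prop :=
  Tr p α p' ∨ (α = τ ∧ p = p')

/-- Lift of `→a` to sets. -/
def SetStep (Tr : Proc → Act → Proc → Prop) (Q : Set Proc) (a : Act) (Q' : Set Proc) : Prop :=
  Q' = {q' | ∃ q ∈ Q, Tr q a q'}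

/-- Lift of `↠` to sets. -/
def SetStar (Tr : Proc → Act → Proc → Prop) (τ : Act) (Q Q' : Set Proc) : Prop :=
  Q' = {q' | ∃ q ∈ Q, Star Tr τ q q'}

/-- Lift of `→(α)` to sets. -/
def SetOpt (Tr : Proc → Act → Proc → Prop) (τ : Act) (Q : Set Proc) (α : Act)
    (Q' : Set Proc) : Prop :=
  Q' = {q' | ∃ q ∈ Q, OptStep Tr τ q α q'}

end LTS

/-! ### The logic HML_srbb -/

mutual
/-- Formulas `φ` of HML_srbb: `⟨ε⟩χ` or immediate conjunctions `⋀Ψ`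
(conjunctions are indexed by an arbitrary type). `⊤` is the empty conjunction. -/
inductive Formula (Act : Type) (τ : Act) : Type 1
  | delayed : DFormula Act τ → Formula Act τ
  | conj : (I : Type) → (I → Conjunct Act τ) → Formula Act τ

/-- Delayed formulas `χ`: observations `⟨a⟩φ` (with `a ≠ τ`), standard
conjunctions `⋀Ψ`, stable conjunctions `⋀({¬⟨τ⟩⊤} ∪ Ψ)`, and branching
conjunctions `⋀({(α)φ} ∪ Ψ)`. -/
inductive DFormula (Act : Type) (τ : Act) : Type 1
  | obs : (a : Act) → a ≠ τ → Formula Act τ → DFormula Act τ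
  | conj : (I : Type) → (I → Conjunct Act τ) → DFormula Act τ
  | stableConj : (I : Type) → (I → Conjunct Act τ) → DFormula Act τ
  | branchConj : (α : Act) → Formula Act τ → (I : Type) → (I → Conjunct Act τ) → DFormula Act τ

/-- Conjuncts `ψ`: positive `⟨ε⟩χ` or negative `¬⟨ε⟩χ`. -/
inductive Conjunct (Act : Type) (τ : Act) : Type 1
  | pos : DFormula Act τ → Conjunct Act τ
  | neg : DFormula Act τ → Conjunct Act τ
end

section Semantics

variable {Proc Act : Type}

mutual
/-- Semantics `⟦φ⟧`. -/
def Sat (Tr : Proc → Act → Proc → Prop) (τ : Act) (p : Proc) : Formula Act τ → Prop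
  | .delayed χ => ∃ p', Star Tr τ p p' ∧ SatD Tr τ p' χ
  | .conj _ ps => ∀ i, SatC Tr τ p (ps i)

/-- Semantics `⟦χ⟧^ε` of delayed formulas. -/
def SatD (Tr : Proc → Act → Proc → Prop) (τ : Act) (p : Proc) : DFormula Act τ → Prop
  | .obs a _ φ => ∃ p', Tr p a p' ∧ Sat Tr τ p' φ
  | .conj _ ps => ∀ i, SatC Tr τ p (ps i)
  | .stableConj _ ps => Stable Tr τ p ∧ ∀ i, SatC Tr τ p (ps i)
  | .branchConj α φ _ ps =>
      (∃ p', OptStep Tr τ p α p' ∧ Sat Tr τ p' φ) ∧ ∀ i, SatC Tr τ p (ps i)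

/-- Semantics `⟦ψ⟧^∧` of conjuncts. -/
def SatC (Tr : Proc → Act → Proc → Prop) (τ : Act) (p : Proc) : Conjunct Act τ → Prop
  | .pos χ => ∃ p', Star Tr τ p p' ∧ SatD Tr τ p' χ
  | .neg χ => ¬ ∃ p', Star Tr τ p p' ∧ SatD Tr τ p' χ
end

/-- `φ` distinguishes `p` from the set `Q`. -/
def Distinguishes (Tr : Proc → Act → Proc → Prop) (τ : Act) (φ : Formula Act τ)
    (p : Proc) (Q : Set Proc) : Prop :=
  Sat Tr τ p φ ∧ ∀ q ∈ Q, ¬ Sat Tr τ q φ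

/-- The delayed formula `χ` distinguishes `p` from the set `Q` w.r.t. `⟦·⟧^ε`. -/
def DistinguishesD (Tr : Proc → Act → Proc → Prop) (τ : Act) (χ : DFormula Act τ)
    (p : Proc) (Q : Set Proc) : Prop :=
  SatD Tr τ p χ ∧ ∀ q ∈ Q, ¬ SatD Tr τ q χ

/-- The conjunct `ψ` distinguishes `p` from `q` w.r.t. `⟦·⟧^∧`. -/
def DistinguishesC (Tr : Proc → Act → Proc → Prop) (τ : Act) (ψ : Conjunct Act τ)
    (p q : Proc) : Prop :=
  SatC Tr τ p ψ ∧ ¬ SatC Tr τ q ψ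

/-- Stability-respecting branching bisimulations: symmetric relations with the
branching-bisimulation transfer property and the stability-respecting
property. -/
def IsSRBBisim (Tr : Proc → Act → Proc → Prop) (τ : Act) (R : Proc → Proc → Prop) : Prop :=
  Symmetric R ∧
  (∀ p q, R p q → ∀ α p', Tr p α p' →
    (α = τ ∧ R p' q) ∨
      ∃ q' q'', Star Tr τ q q' ∧ Tr q' α q'' ∧ R p q' ∧ R p' q'') ∧
  (∀ p q, R p q → Stable Tr τ p →
    ∃ q', Star Tr τ q q' ∧ Stable Tr τ q' ∧ R p q')

end Semantics

/-! ### Expressiveness prices -/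

section Expr

variable {Act : Type} {τ : Act}

mutual
/-- Expressiveness price `expr` of formulas. -/
def exprF : Formula Act τ → Energy
  | .delayed χ => exprE χ
  | .conj I ps => ⨆ _ : Nonempty I, ((unitE 4 + unitE 2) + ⨆ i, exprC (ps i))

/-- Expressiveness price `expr^ε` of delayed formulas. -/
def exprE : DFormula Act τ → Energy
  | .obs _ _ φ => unitE 0 + exprF φ
  | .conj I ps => ⨆ _ : Nonempty I, (unitE 2 + ⨆ i, exprC (ps i))
  | .stableConj _ ps => unitE 3 + ⨆ i, exprC (ps i)
  | .branchConj _ φ _ ps =>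
      (unitE 1 + unitE 2) +
        (((unitE 0 + exprF φ) ⊔ onlyAt 5 (1 + exprF φ 0)) ⊔ ⨆ i, exprC (ps i))

/-- Expressiveness price `expr^∧` of conjuncts. -/
def exprC : Conjunct Act τ → Energy
  | .pos χ => exprE χ ⊔ onlyAt 5 (exprE χ 0)
  | .neg χ => (unitE 7 + exprE χ) ⊔ onlyAt 6 (exprE χ 0)
end

end Expr

/-! ### The weak spectroscopy energy game -/

/-- Positions of the weak spectroscopy game. -/
inductive GPos (Proc Act : Type) : Type
  | att (p : Proc) (Q : Set Proc)                                 -- `[p,Q]_a`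
  | attD (p : Proc) (Q : Set Proc)                                -- `[p,Q]^ε_a`
  | attC (p q : Proc)                                             -- `[p,q]^∧_a`
  | attB (p : Proc) (Q : Set Proc)                                -- `[p,Q]^η_a`
  | defC (p : Proc) (Q : Set Proc)                                -- `(p,Q)_d`
  | defS (p : Proc) (Q : Set Proc)                                -- `(p,Q)^s_d`
  | defB (p : Proc) (α : Act) (p' : Proc) (Q Qa : Set Proc)       -- `(p,α,p',Q,Qa)^η_d`

/-- The zero update. -/
def zeroU : Update := fun _ => UpdComp.zero

/-- The update `-ê_i`. -/
def decU (i : Fin 8) : Update := fun k => if k = i then UpdComp.decr else UpdComp.zero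

/-- The update `(min_{1,6},0,0,0,0,0,0,0)`. -/
def minU16 : Update := fun k => if k = 0 then UpdComp.minWith {5} else UpdComp.zero

/-- The update `(min_{1,7},0,0,0,0,0,0,-1)`. -/
def minU17dec8 : Update := fun k =>
  if k = 0 then UpdComp.minWith {6} else if k = 7 then UpdComp.decr else UpdComp.zero

/-- The update `(0,-1,-1,0,0,0,0,0)`. -/
def dec23 : Update := fun k => if k = 1 ∨ k = 2 then UpdComp.decr else UpdComp.zero

/-- The update `(min_{1,6},-1,-1,0,0,0,0,0)`. -/
def minU16dec23 : Update := fun k =>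
  if k = 0 then UpdComp.minWith {5}
  else if k = 1 ∨ k = 2 then UpdComp.decr else UpdComp.zero

section Game

variable {Proc Act : Type}

/-- Moves of the weak spectroscopy game. -/
inductive GMove (Tr : Proc → Act → Proc → Prop) (τ : Act) :
    GPos Proc Act → Update → GPos Proc Act → Prop
  | delay {p : Proc} {Q Q' : Set Proc} :
      SetStar Tr τ Q Q' →
      GMove Tr τ (.att p Q) zeroU (.attD p Q')
  | procrastination {p p' : Proc} {Q : Set Proc} :
      Tr p τ p' → p ≠ p' →
      GMove Tr τ (.attD p Q) zeroU (.attD p' Q)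
  | observation {p p' : Proc} {a : Act} {Q Q' : Set Proc} :
      Tr p a p' → a ≠ τ → SetStep Tr Q a Q' →
      GMove Tr τ (.attD p Q) (decU 0) (.att p' Q')
  | finishing {p : Proc} :
      GMove Tr τ (.att p ∅) zeroU (.defC p ∅)
  | immediateConj {p : Proc} {Q : Set Proc} :
      Q ≠ ∅ →
      GMove Tr τ (.att p Q) (decU 4) (.defC p Q)
  | lateConj {p : Proc} {Q : Set Proc} :
      GMove Tr τ (.attD p Q) zeroU (.defC p Q)
  | conjAnswer {p q : Proc} {Q : Set Proc} :
      q ∈ Q →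
      GMove Tr τ (.defC p Q) (decU 2) (.attC p q)
  | posConjunct {p q : Proc} {Q : Set Proc} :
      SetStar Tr τ {q} Q →
      GMove Tr τ (.attC p q) minU16 (.attD p Q)
  | negConjunct {p q : Proc} {Q : Set Proc} :
      SetStar Tr τ {p} Q → p ≠ q →
      GMove Tr τ (.attC p q) minU17dec8 (.attD q Q)
  | stableConj {p : Proc} {Q : Set Proc} :
      Stable Tr τ p →
      GMove Tr τ (.attD p Q) zeroU (.defS p {q ∈ Q | Stable Tr τ q})
  | conjStableAnswer {p q : Proc} {Q : Set Proc} :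
      q ∈ Q →
      GMove Tr τ (.defS p Q) (decU 3) (.attC p q)
  | stableFinishing {p : Proc} :
      GMove Tr τ (.defS p ∅) (decU 3) (.defC p ∅)
  | branchConj {p p' : Proc} {α : Act} {Q Qa : Set Proc} :
      OptStep Tr τ p α p' → Qa ⊆ Q →
      GMove Tr τ (.attD p Q) zeroU (.defB p α p' (Q \ Qa) Qa)
  | branchAnswer {p p' q : Proc} {α : Act} {Q Qa : Set Proc} :
      q ∈ Q →
      GMove Tr τ (.defB p α p' Q Qa) dec23 (.attC p q)
  | branchObservation {p p' : Proc} {α : Act} {Q Qa Q' : Set Proc} :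
      SetOpt Tr τ Qa α Q' →
      GMove Tr τ (.defB p α p' Q Qa) minU16dec23 (.attB p' Q')
  | branchAccounting {p : Proc} {Q : Set Proc} :
      GMove Tr τ (.attB p Q) (decU 0) (.att p Q)

/-- Defender positions of the weak spectroscopy game. -/
def isDefender : GPos Proc Act → Prop
  | .defC _ _ => True
  | .defS _ _ => True
  | .defB _ _ _ _ _ => True
  | _ => False

/-- The weak spectroscopy energy game `G△`. -/
def specGame (Tr : Proc → Act → Proc → Prop) (τ : Act) : EGame (GPos Proc Act) where
  defender := isDefender
  move := GMove Tr τ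

end Game

/-! ### Strategy formulas -/

section Strat

variable {Proc Act : Type}

mutual
/-- Attacker strategy formulas (formula sort). -/
inductive StratF (Tr : Proc → Act → Proc → Prop) (τ : Act) :
    GPos Proc Act → Energy → Formula Act τ → Prop
  | delay {p : Proc} {Q Q' : Set Proc} {u : Update} {e e' : Energy} {χ : DFormula Act τ} :
      GMove Tr τ (.att p Q) u (.attD p Q') →
      upd e u = some e' →
      (specGame Tr τ).Win (.attD p Q') e' →
      StratD Tr τ (.attD p Q') e' χ →
      StratF Tr τ (.att p Q) e (.delayed χ)
  | immediateConj {p : Proc} {Q : Set Proc} {u : Update} {e e' : Energy}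
      {I : Type} {ps : I → Conjunct Act τ} :
      GMove Tr τ (.att p Q) u (.defC p Q) →
      upd e u = some e' →
      (specGame Tr τ).Win (.defC p Q) e' →
      StratD Tr τ (.defC p Q) e' (.conj I ps) →
      StratF Tr τ (.att p Q) e (.conj I ps)

/-- Attacker strategy formulas (delayed-formula sort). -/
inductive StratD (Tr : Proc → Act → Proc → Prop) (τ : Act) :
    GPos Proc Act → Energy → DFormula Act τ → Prop
  | procrastination {p p' : Proc} {Q : Set Proc} {u : Update} {e e' : Energy}
      {χ : DFormula Act τ} :
      GMove Tr τ (.attD p Q) u (.attD p' Q) →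
      upd e u = some e' →
      (specGame Tr τ).Win (.attD p' Q) e' →
      StratD Tr τ (.attD p' Q) e' χ →
      StratD Tr τ (.attD p Q) e χ
  | observation {p p' : Proc} {a : Act} {Q Q' : Set Proc} {u : Update} {e e' : Energy}
      {φ : Formula Act τ} (ha : a ≠ τ) :
      GMove Tr τ (.attD p Q) u (.att p' Q') →
      Tr p a p' → SetStep Tr Q a Q' →
      upd e u = some e' →
      (specGame Tr τ).Win (.att p' Q') e' →
      StratF Tr τ (.att p' Q') e' φ →
      StratD Tr τ (.attD p Q) e (.obs a ha φ)
  | lateConj {p : Proc} {Q : Set Proc} {u : Update} {e e' : Energy} {χ : DFormula Act τ} :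
      GMove Tr τ (.attD p Q) u (.defC p Q) →
      upd e u = some e' →
      (specGame Tr τ).Win (.defC p Q) e' →
      StratD Tr τ (.defC p Q) e' χ →
      StratD Tr τ (.attD p Q) e χ
  | stable {p : Proc} {Q Q' : Set Proc} {u : Update} {e e' : Energy} {χ : DFormula Act τ} :
      GMove Tr τ (.attD p Q) u (.defS p Q') →
      upd e u = some e' →
      (specGame Tr τ).Win (.defS p Q') e' →
      StratD Tr τ (.defS p Q') e' χ →
      StratD Tr τ (.attD p Q) e χ
  | branch {p p' : Proc} {α : Act} {Q Q' Qa : Set Proc} {u : Update} {e e' : Energy}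
      {χ : DFormula Act τ} :
      GMove Tr τ (.attD p Q) u (.defB p α p' Q' Qa) →
      upd e u = some e' →
      (specGame Tr τ).Win (.defB p α p' Q' Qa) e' →
      StratD Tr τ (.defB p α p' Q' Qa) e' χ →
      StratD Tr τ (.attD p Q) e χ
  | conj {p : Proc} {Q : Set Proc} {e : Energy}
      (us : {q // q ∈ Q} → Update) (es : {q // q ∈ Q} → Energy)
      (ψs : {q // q ∈ Q} → Conjunct Act τ) :
      (∀ qq : {q // q ∈ Q}, GMove Tr τ (.defC p Q) (us qq) (.attC p qq.1)) →
      (∀ qq : {q // q ∈ Q}, upd e (us qq) = some (es qq)) →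
      (∀ qq : {q // q ∈ Q}, (specGame Tr τ).Win (.attC p qq.1) (es qq)) →
      (∀ qq : {q // q ∈ Q}, StratC Tr τ (.attC p qq.1) (es qq) (ψs qq)) →
      StratD Tr τ (.defC p Q) e (.conj {q // q ∈ Q} ψs)
  | stableConj {p : Proc} {Q : Set Proc} {e : Energy}
      (hne : Q.Nonempty)
      (us : {q // q ∈ Q} → Update) (es : {q // q ∈ Q} → Energy)
      (ψs : {q // q ∈ Q} → Conjunct Act τ) :
      (∀ qq : {q // q ∈ Q}, GMove Tr τ (.defS p Q) (us qq) (.attC p qq.1)) →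
      (∀ qq : {q // q ∈ Q}, upd e (us qq) = some (es qq)) →
      (∀ qq : {q // q ∈ Q}, (specGame Tr τ).Win (.attC p qq.1) (es qq)) →
      (∀ qq : {q // q ∈ Q}, StratC Tr τ (.attC p qq.1) (es qq) (ψs qq)) →
      StratD Tr τ (.defS p Q) e (.stableConj {q // q ∈ Q} ψs)
  | stableFinish {p : Proc} {u : Update} {e e' : Energy} :
      GMove Tr τ (.defS p ∅) u (.defC p ∅) →
      upd e u = some e' →
      (specGame Tr τ).Win (.defC p (∅ : Set Proc)) e' →
      StratD Tr τ (.defS p ∅) e (.stableConj Empty fun x => x.elim)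
  | branchConj {p p' : Proc} {α : Act} {Q Qa Q' : Set Proc} {ua ua' : Update}
      {e e1 ea : Energy} {φa : Formula Act τ}
      (us : {q // q ∈ Q} → Update) (es : {q // q ∈ Q} → Energy)
      (ψs : {q // q ∈ Q} → Conjunct Act τ) :
      GMove Tr τ (.defB p α p' Q Qa) ua (.attB p' Q') →
      GMove Tr τ (.attB p' Q') ua' (.att p' Q') →
      upd e ua = some e1 →
      upd e1 ua' = some ea →
      (specGame Tr τ).Win (.att p' Q') ea →
      StratF Tr τ (.att p' Q') ea φa →
      (∀ qq : {q // q ∈ Q}, GMove Tr τ (.defB p α p' Q Qa) (us qq) (.attC p qq.1)) →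
      (∀ qq : {q // q ∈ Q}, upd e (us qq) = some (es qq)) →
      (∀ qq : {q // q ∈ Q}, (specGame Tr τ).Win (.attC p qq.1) (es qq)) →
      (∀ qq : {q // q ∈ Q}, StratC Tr τ (.attC p qq.1) (es qq) (ψs qq)) →
      StratD Tr τ (.defB p α p' Q Qa) e (.branchConj α φa {q // q ∈ Q} ψs)

/-- Attacker strategy formulas (conjunct sort). -/
inductive StratC (Tr : Proc → Act → Proc → Prop) (τ : Act) :
    GPos Proc Act → Energy → Conjunct Act τ → Prop
  | pos {p q : Proc} {Q' : Set Proc} {u : Update} {e e' : Energy} {χ : DFormula Act τ} :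
      GMove Tr τ (.attC p q) u (.attD p Q') →
      upd e u = some e' →
      (specGame Tr τ).Win (.attD p Q') e' →
      StratD Tr τ (.attD p Q') e' χ →
      StratC Tr τ (.attC p q) e (.pos χ)
  | neg {p q : Proc} {P' : Set Proc} {u : Update} {e e' : Energy} {χ : DFormula Act τ} :
      GMove Tr τ (.attC p q) u (.attD q P') →
      upd e u = some e' →
      (specGame Tr τ).Win (.attD q P') e' →
      StratD Tr τ (.attD q P') e' χ →
      StratC Tr τ (.attC p q) e (.neg χ)
end

end Strat


/-! ### Auxiliary lemmas for the proof -/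

section ProofAux

variable {Proc Act : Type} {Tr : Proc → Act → Proc → Prop} {τ : Act}

/-- The result of a defined update. -/
def updFun (e : Energy) (u : Update) : Energy := fun k =>
  match u k with
  | UpdComp.decr => e k - 1
  | UpdComp.zero => e k
  | UpdComp.minWith D => (insert k D).inf e

lemma upd_eq_of (e : Energy) (u : Update) (h : ∀ k, u k = UpdComp.decr → e k ≠ 0) :
    upd e u = some (updFun e u) := by
  rw [upd, if_pos h]; rfl

lemma upd_zeroU (e : Energy) : upd e zeroU = some e := by
  rw [upd_eq_of e zeroU (by intro k hk; simp [zeroU] at hk)]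
  rfl

lemma upd_mono {e e' f : Energy} {u : Update} (h : upd e u = some f)
    (hle : e ≤ e') : ∃ f', upd e' u = some f' ∧ f ≤ f' := by
  rw [upd] at h
  split at h
  case isTrue hc =>
    have hc' : ∀ k, u k = UpdComp.decr → e' k ≠ 0 := by
      intro k hk h0
      exact hc k hk (le_antisymm (h0 ▸ hle k) zero_le)
    refine ⟨_, upd_eq_of e' u hc', ?_⟩
    rw [Option.some_inj] at h
    subst h
    intro k
    show (updFun e u) k ≤ (updFun e' u) k
    unfold updFun
    cases hu : u k with
    | decr => simp only [hu]; exact tsub_le_tsub_right (hle k) 1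
    | zero => simp only [hu]; exact hle k
    | minWith D => simp only [hu]; exact Finset.inf_mono_fun fun i _ => hle i
  case isFalse => exact absurd h (by simp)

lemma win_mono {Pos : Type} {G : EGame Pos} {g : Pos} {e : Energy}
    (h : G.Win g e) : ∀ e', e ≤ e' → G.Win g e' := by
  induction h with
  | attack hd mv hupd _ ih =>
      intro e' hle
      obtain ⟨f', h1, h2⟩ := upd_mono hupd hle
      exact .attack hd mv h1 (ih f' h2)
  | defend hd hne hwin ih =>
      intro e' hle
      refine .defend hd ?_ ?_
      · intro u g' mv
        obtain ⟨f, hf⟩ := Option.ne_none_iff_exists'.mp (hne u g' mv)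
        obtain ⟨f', h1, _⟩ := upd_mono hf hle
        simp [h1]
      · intro u g' f' mv hupd'
        obtain ⟨f, hf⟩ := Option.ne_none_iff_exists'.mp (hne u g' mv)
        obtain ⟨f'', h1, h2⟩ := upd_mono hf hle
        rw [hupd'] at h1
        rw [Option.some_inj] at h1
        subst h1
        exact ih u g' f mv hf f' h2

lemma attack' {g g' : GPos Proc Act} {u : Update} {e e₁ f : Energy}
    (hd : ¬ isDefender g) (mv : GMove Tr τ g u g') (hupd : upd e u = some e₁)
    (hle : f ≤ e₁) (hw : (specGame Tr τ).Win g' f) : (specGame Tr τ).Win g e :=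
  .attack hd mv hupd (win_mono hw e₁ hle)

lemma defend' {g : GPos Proc Act} {e : Energy} (hd : isDefender g)
    (h : ∀ u g', GMove Tr τ g u g' → ∃ e', upd e u = some e' ∧ (specGame Tr τ).Win g' e') :
    (specGame Tr τ).Win g e := by
  refine .defend hd (fun u g' mv => ?_) (fun u g' e' mv hupd => ?_)
  · obtain ⟨e', h1, _⟩ := h u g' mv; simp [h1]
  · obtain ⟨e'', h1, h2⟩ := h u g' mv
    rw [h1, Option.some_inj] at hupd
    exact hupd ▸ h2

lemma win_defC_empty (p : Proc) (e : Energy) :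
    (specGame Tr τ).Win (.defC p (∅ : Set Proc)) e := by
  refine defend' trivial (fun u g' mv => ?_)
  cases mv with
  | conjAnswer hq => exact absurd hq (by simp)

lemma win_procrastinate {p p' : Proc} {Q : Set Proc} {e : Energy}
    (hs : Star Tr τ p p') (hw : (specGame Tr τ).Win (.attD p' Q) e) :
    (specGame Tr τ).Win (.attD p Q) e := by
  induction hs using Relation.ReflTransGen.head_induction_on with
  | refl => exact hw
  | head hstep _ ih =>
      rename_i a c _
      by_cases hac : a = c
      · exact hac ▸ ih
      · exact attack' (fun h => h) (GMove.procrastination hstep hac) (upd_zeroU e) le_rfl ih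

end ProofAux
section MainAux

variable {Proc Act : Type} {Tr : Proc → Act → Proc → Prop} {τ : Act}

lemma updFun_decU (e : Energy) (i k : Fin 8) :
    updFun e (decU i) k = if k = i then e k - 1 else e k := by
  unfold updFun decU
  by_cases h : k = i <;> simp [h]

lemma updFun_minU16 (e : Energy) (k : Fin 8) :
    updFun e minU16 k = if k = 0 then e 0 ⊓ e 5 else e k := by
  unfold updFun minU16
  by_cases h : k = 0 <;> simp [h, Finset.inf_insert, Finset.inf_singleton]

lemma updFun_minU17dec8 (e : Energy) (k : Fin 8) :
    updFun e minU17dec8 k = if k = 0 then e 0 ⊓ e 6 else if k = 7 then e k - 1 else e k := by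
  unfold updFun minU17dec8
  by_cases h : k = 0
  · simp [h, Finset.inf_insert, Finset.inf_singleton]
  · by_cases h7 : k = 7 <;> simp [h, h7]

lemma updFun_dec23 (e : Energy) (k : Fin 8) :
    updFun e dec23 k = if k = 1 ∨ k = 2 then e k - 1 else e k := by
  unfold updFun dec23
  by_cases h : k = 1 ∨ k = 2 <;> simp [h]

lemma updFun_minU16dec23 (e : Energy) (k : Fin 8) :
    updFun e minU16dec23 k =
      if k = 0 then e 0 ⊓ e 5 else if k = 1 ∨ k = 2 then e k - 1 else e k := by
  unfold updFun minU16dec23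
  by_cases h : k = 0
  · simp [h, Finset.inf_insert, Finset.inf_singleton]
  · by_cases h12 : k = 1 ∨ k = 2 <;> simp [h, h12]

lemma one_add_ne_zero' (a : ℕ∞) : 1 + a ≠ 0 := by
  simp [add_eq_zero]

end MainAux

lemma le_tsub_one {a b : ℕ∞} (h : 1 + a ≤ b) : a ≤ b - 1 :=
  (ENat.addLECancellable_of_ne_top (by simp)).le_tsub_of_add_le_left h
section DefHelp

variable {Proc Act : Type} {Tr : Proc → Act → Proc → Prop} {τ : Act}

lemma le_S_apply {I : Type} (f : I → Energy) (i : I) (k : Fin 8) :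
    f i k ≤ (⨆ j, f j) k := by
  rw [iSup_apply]; exact le_iSup (fun j => f j k) i

lemma win_defC_of (p : Proc) (Q : Set Proc) (S : Energy)
    (h : ∀ q ∈ Q, ∃ f, f ≤ S ∧ (specGame Tr τ).Win (.attC p q) f) :
    (specGame Tr τ).Win (.defC p Q) (unitE 2 + S) := by
  refine defend' trivial (fun u g' mv => ?_)
  cases mv with
  | conjAnswer hq =>
      obtain ⟨f, hfS, hwin⟩ := h _ hq
      have hdef : ∀ k, decU 2 k = UpdComp.decr → (unitE 2 + S) k ≠ 0 := by
        intro k hk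
        have hk2 : k = 2 := by by_contra hne; simp [decU, hne] at hk
        subst hk2
        simp [unitE, one_add_ne_zero']
      refine ⟨_, upd_eq_of _ _ hdef, win_mono hwin _ ?_⟩
      intro k
      rw [updFun_decU]
      by_cases hk : k = 2
      · subst hk
        simp only [if_pos rfl, Pi.add_apply, unitE, if_pos rfl]
        exact le_trans (hfS 2) (le_tsub_one le_rfl)
      · simp only [if_neg hk, Pi.add_apply, unitE, if_neg hk, zero_add]
        exact hfS k

lemma win_defS_of (p : Proc) (Q : Set Proc) (S : Energy)
    (h : ∀ q ∈ Q, ∃ f, f ≤ S ∧ (specGame Tr τ).Win (.attC p q) f) :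
    (specGame Tr τ).Win (.defS p Q) (unitE 3 + S) := by
  have hdef : ∀ k, decU 3 k = UpdComp.decr → (unitE 3 + S) k ≠ 0 := by
    intro k hk
    have hk3 : k = 3 := by by_contra hne; simp [decU, hne] at hk
    subst hk3
    simp [unitE, one_add_ne_zero']
  refine defend' trivial (fun u g' mv => ?_)
  cases mv with
  | conjStableAnswer hq =>
      obtain ⟨f, hfS, hwin⟩ := h _ hq
      refine ⟨_, upd_eq_of _ _ hdef, win_mono hwin _ ?_⟩
      intro k
      rw [updFun_decU]
      by_cases hk : k = 3
      · subst hk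
        simp only [if_pos rfl, Pi.add_apply, unitE, if_pos rfl]
        exact le_trans (hfS 3) (le_tsub_one le_rfl)
      · simp only [if_neg hk, Pi.add_apply, unitE, if_neg hk, zero_add]
        exact hfS k
  | stableFinishing =>
      exact ⟨_, upd_eq_of _ _ hdef, win_defC_empty p _⟩

lemma win_defB_of (p p'' : Proc) (α : Act) (Qd Qa : Set Proc) (X : Energy)
    (hans : ∀ q ∈ Qd, ∃ f, f ≤ X ∧ (specGame Tr τ).Win (.attC p q) f)
    (hobs : ∀ Q', SetOpt Tr τ Qa α Q' →
        ∃ f, f ≤ X ∧ 1 + f 0 ≤ X 0 ⊓ X 5 ∧ (specGame Tr τ).Win (.att p'' Q') f) :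
    (specGame Tr τ).Win (.defB p α p'' Qd Qa) ((unitE 1 + unitE 2) + X) := by
  have he1 : ((unitE 1 + unitE 2) + X) 1 = 1 + X 1 := by simp [unitE]
  have he2 : ((unitE 1 + unitE 2) + X) 2 = 1 + X 2 := by simp [unitE]
  have he0 : ((unitE 1 + unitE 2) + X) 0 = X 0 := by simp [unitE]
  have he5 : ((unitE 1 + unitE 2) + X) 5 = X 5 := by simp [unitE]
  have hek : ∀ k, ¬ (k = 1 ∨ k = 2) → ((unitE 1 + unitE 2) + X) k = X k := by
    intro k hk
    push_neg at hk
    simp [unitE, hk.1, hk.2]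
  refine defend' trivial (fun u g' mv => ?_)
  cases mv with
  | branchAnswer hq =>
      obtain ⟨f, hfX, hwin⟩ := hans _ hq
      have hdef : ∀ k, dec23 k = UpdComp.decr → ((unitE 1 + unitE 2) + X) k ≠ 0 := by
        intro k hk
        have hk12 : k = 1 ∨ k = 2 := by by_contra hne; simp [dec23, hne] at hk
        rcases hk12 with hk1 | hk2
        · subst hk1; rw [he1]; exact one_add_ne_zero' _
        · subst hk2; rw [he2]; exact one_add_ne_zero' _
      refine ⟨_, upd_eq_of _ _ hdef, win_mono hwin _ ?_⟩
      intro k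
      rw [updFun_dec23]
      by_cases hk : k = 1 ∨ k = 2
      · rw [if_pos hk]
        rcases hk with hk1 | hk2
        · subst hk1; rw [he1]; exact le_trans (hfX 1) (le_tsub_one le_rfl)
        · subst hk2; rw [he2]; exact le_trans (hfX 2) (le_tsub_one le_rfl)
      · rw [if_neg hk, hek k hk]; exact hfX k
  | branchObservation hQ' =>
      obtain ⟨f, hfX, hf0, hwin⟩ := hobs _ hQ'
      have hdef : ∀ k, minU16dec23 k = UpdComp.decr → ((unitE 1 + unitE 2) + X) k ≠ 0 := by
        intro k hk
        have hk12 : k = 1 ∨ k = 2 := by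
          by_contra hne
          push_neg at hne
          by_cases h0 : k = 0 <;> simp [minU16dec23, h0, hne.1, hne.2] at hk
        rcases hk12 with hk1 | hk2
        · subst hk1; rw [he1]; exact one_add_ne_zero' _
        · subst hk2; rw [he2]; exact one_add_ne_zero' _
      set e := (unitE 1 + unitE 2) + X with hee
      set e1 := updFun e minU16dec23 with he1def
      refine ⟨e1, upd_eq_of _ _ hdef, ?_⟩
      -- now attack with branch accounting
      have h10 : e1 0 = X 0 ⊓ X 5 := by
        rw [he1def, updFun_minU16dec23, if_pos rfl, he0, he5]
      have hdef2 : ∀ k, decU 0 k = UpdComp.decr → e1 k ≠ 0 := by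
        intro k hk
        have hk0 : k = 0 := by by_contra hne; simp [decU, hne] at hk
        subst hk0
        rw [h10]
        intro hc
        rw [hc] at hf0
        exact one_add_ne_zero' (f 0) (le_antisymm (le_trans hf0 zero_le) zero_le)
      refine attack' (fun h => h) GMove.branchAccounting (upd_eq_of _ _ hdef2) ?_ hwin
      intro k
      rw [updFun_decU]
      by_cases hk : k = 0
      · subst hk
        rw [if_pos rfl, h10]
        exact le_tsub_one hf0
      · rw [if_neg hk, he1def, updFun_minU16dec23, if_neg hk]
        by_cases hk12 : k = 1 ∨ k = 2
        · rw [if_pos hk12]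
          rcases hk12 with hk1 | hk2
          · subst hk1; rw [he1]; exact le_trans (hfX 1) (le_tsub_one le_rfl)
          · subst hk2; rw [he2]; exact le_trans (hfX 2) (le_tsub_one le_rfl)
        · rw [if_neg hk12, hek k hk12]; exact hfX k

end DefHelp
section Main

variable {Proc Act : Type} {Tr : Proc → Act → Proc → Prop} {τ : Act}

mutual

theorem winF (φ : Formula Act τ) (p : Proc) (Q : Set Proc)
    (hp : Sat Tr τ p φ) (hQ : ∀ q ∈ Q, ¬ Sat Tr τ q φ) :
    (specGame Tr τ).Win (.att p Q) (exprF φ) := by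
  cases φ with
  | delayed χ =>
      simp only [Sat] at hp
      obtain ⟨p', hpp', hχ⟩ := hp
      have hQ' : ∀ q' ∈ {q' | ∃ q ∈ Q, Star Tr τ q q'}, ¬ SatD Tr τ q' χ := by
        rintro q' ⟨q, hqQ, hqq'⟩ hχ'
        exact hQ q hqQ (by simp only [Sat]; exact ⟨q', hqq', hχ'⟩)
      have hwin := win_procrastinate hpp' (winE χ p' _ hχ hQ')
      simp only [exprF]
      exact attack' (fun h => h) (GMove.delay rfl) (upd_zeroU _) le_rfl hwin
  | conj I ps =>
      simp only [Sat] at hp hQ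
      by_cases hQe : Q = ∅
      · subst hQe
        exact attack' (fun h => h) GMove.finishing (upd_zeroU _) le_rfl (win_defC_empty p _)
      · obtain ⟨q0, hq0⟩ := Set.nonempty_iff_ne_empty.mpr hQe
        have hI : Nonempty I := by
          have h := hQ q0 hq0
          push_neg at h
          obtain ⟨i, _⟩ := h
          exact ⟨i⟩
        have hwin : (specGame Tr τ).Win (.defC p Q) (unitE 2 + ⨆ i, exprC (ps i)) := by
          refine win_defC_of p Q _ (fun q hq => ?_)
          have h := hQ q hq
          push_neg at h
          obtain ⟨i, hi⟩ := h
          exact ⟨exprC (ps i), fun k => le_S_apply (fun j => exprC (ps j)) i k,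
            winC (ps i) p q (hp i) hi⟩
        simp only [exprF, iSup_pos hI]
        have hdef : ∀ k, decU 4 k = UpdComp.decr →
            ((unitE 4 + unitE 2) + ⨆ i, exprC (ps i)) k ≠ 0 := by
          intro k hk
          have hk4 : k = 4 := by by_contra hne; simp [decU, hne] at hk
          subst hk4
          simp [unitE, one_add_ne_zero']
        refine attack' (fun h => h) (GMove.immediateConj hQe) (upd_eq_of _ _ hdef) ?_ hwin
        intro k
        rw [updFun_decU]
        by_cases hk : k = 4
        · subst hk
          rw [if_pos rfl]
          refine le_tsub_one ?_
          simp [unitE]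
        · simp only [if_neg hk, Pi.add_apply, unitE, if_neg hk]
          by_cases hk2 : k = 2 <;> simp [hk2, hk]

theorem winE (χ : DFormula Act τ) (p : Proc) (Q : Set Proc)
    (hp : SatD Tr τ p χ) (hQ : ∀ q ∈ Q, ¬ SatD Tr τ q χ) :
    (specGame Tr τ).Win (.attD p Q) (exprE χ) := by
  cases χ with
  | obs a ha φ =>
      simp only [SatD] at hp
      obtain ⟨p', hpp', hφ⟩ := hp
      have hQ' : ∀ q' ∈ {q' | ∃ q ∈ Q, Tr q a q'}, ¬ Sat Tr τ q' φ := by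
        rintro q' ⟨q, hqQ, hqq'⟩ hφ'
        exact hQ q hqQ (by simp only [SatD]; exact ⟨q', hqq', hφ'⟩)
      have hwin := winF φ p' _ hφ hQ'
      simp only [exprE]
      have hdef : ∀ k, decU 0 k = UpdComp.decr → (unitE 0 + exprF φ) k ≠ 0 := by
        intro k hk
        have hk0 : k = 0 := by by_contra hne; simp [decU, hne] at hk
        subst hk0
        simp [unitE, one_add_ne_zero']
      refine attack' (fun h => h) (GMove.observation hpp' ha rfl) (upd_eq_of _ _ hdef) ?_ hwin
      intro k
      rw [updFun_decU]
      by_cases hk : k = 0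
      · subst hk
        simp only [if_pos rfl, Pi.add_apply, unitE, if_pos rfl]
        exact le_tsub_one le_rfl
      · simp [hk, unitE]
  | conj I ps =>
      simp only [SatD] at hp hQ
      by_cases hQe : Q = ∅
      · subst hQe
        exact attack' (fun h => h) GMove.lateConj (upd_zeroU _) le_rfl (win_defC_empty p _)
      · obtain ⟨q0, hq0⟩ := Set.nonempty_iff_ne_empty.mpr hQe
        have hI : Nonempty I := by
          have h := hQ q0 hq0
          push_neg at h
          obtain ⟨i, _⟩ := h
          exact ⟨i⟩
        have hwin : (specGame Tr τ).Win (.defC p Q) (unitE 2 + ⨆ i, exprC (ps i)) := by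
          refine win_defC_of p Q _ (fun q hq => ?_)
          have h := hQ q hq
          push_neg at h
          obtain ⟨i, hi⟩ := h
          exact ⟨exprC (ps i), fun k => le_S_apply (fun j => exprC (ps j)) i k,
            winC (ps i) p q (hp i) hi⟩
        simp only [exprE, iSup_pos hI]
        exact attack' (fun h => h) GMove.lateConj (upd_zeroU _) le_rfl hwin
  | stableConj I ps =>
      simp only [SatD] at hp hQ
      obtain ⟨hstab, hall⟩ := hp
      have hwin : (specGame Tr τ).Win (.defS p {q ∈ Q | Stable Tr τ q})
          (unitE 3 + ⨆ i, exprC (ps i)) := by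
        refine win_defS_of p _ _ (fun q hq => ?_)
        obtain ⟨hqQ, hqs⟩ := hq
        have h := hQ q hqQ
        push_neg at h
        obtain ⟨i, hi⟩ := h hqs
        exact ⟨exprC (ps i), fun k => le_S_apply (fun j => exprC (ps j)) i k,
          winC (ps i) p q (hall i) hi⟩
      simp only [exprE]
      exact attack' (fun h => h) (GMove.stableConj hstab) (upd_zeroU _) le_rfl hwin
  | branchConj α φ I ps =>
      simp only [SatD] at hp hQ
      obtain ⟨⟨p'', hopt, hφ⟩, hall⟩ := hp
      set X : Energy :=
        ((unitE 0 + exprF φ) ⊔ onlyAt 5 (1 + exprF φ 0)) ⊔ ⨆ i, exprC (ps i) with hX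
      set Qa : Set Proc := {q ∈ Q | ∀ i, SatC Tr τ q (ps i)} with hQa
      have hwin : (specGame Tr τ).Win (.defB p α p'' (Q \ Qa) Qa) ((unitE 1 + unitE 2) + X) := by
        refine win_defB_of p p'' α _ _ X (fun q hq => ?_) (fun Q' hQ' => ?_)
        · obtain ⟨hqQ, hqn⟩ := hq
          have h : ¬ ∀ i, SatC Tr τ q (ps i) := fun hcon => hqn ⟨hqQ, hcon⟩
          push_neg at h
          obtain ⟨i, hi⟩ := h
          refine ⟨exprC (ps i), fun k => le_trans (le_S_apply (fun j => exprC (ps j)) i k) ?_,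
            winC (ps i) p q (hall i) hi⟩
          exact le_sup_right (a := ((unitE 0 + exprF φ) ⊔ onlyAt 5 (1 + exprF φ 0))) k
        · subst hQ'
          have hdist : ∀ q' ∈ {q' | ∃ x ∈ Qa, OptStep Tr τ x α q'}, ¬ Sat Tr τ q' φ := by
            rintro q' ⟨x, ⟨hxQ, hxall⟩, hstep⟩ hφ'
            exact hQ x hxQ ⟨⟨q', hstep, hφ'⟩, hxall⟩
          refine ⟨exprF φ, ?_, ?_, winF φ p'' _ hφ hdist⟩
          · intro k
            refine le_trans ?_ ((le_sup_left (b := ⨆ i, exprC (ps i))) k)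
            refine le_trans ?_ ((le_sup_left (b := onlyAt 5 (1 + exprF φ 0))) k)
            simp only [Pi.add_apply]
            exact le_add_self
          · have h0 : (unitE 0 + exprF φ) 0 = 1 + exprF φ 0 := by simp [unitE]
            refine le_inf ?_ ?_
            · refine le_trans ?_ ((le_sup_left (b := ⨆ i, exprC (ps i))) 0)
              refine le_trans ?_ ((le_sup_left (b := onlyAt 5 (1 + exprF φ 0))) 0)
              rw [h0]
            · refine le_trans ?_ ((le_sup_left (b := ⨆ i, exprC (ps i))) 5)
              refine le_trans ?_ ((le_sup_right (a := unitE 0 + exprF φ)) 5)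
              simp [onlyAt]
      simp only [exprE]
      exact attack' (fun h => h) (GMove.branchConj hopt (Set.sep_subset _ _))
        (upd_zeroU _) le_rfl hwin

theorem winC (ψ : Conjunct Act τ) (p q : Proc)
    (hp : SatC Tr τ p ψ) (hq : ¬ SatC Tr τ q ψ) :
    (specGame Tr τ).Win (.attC p q) (exprC ψ) := by
  cases ψ with
  | pos χ =>
      simp only [SatC] at hp hq
      obtain ⟨p', hpp', hχ⟩ := hp
      have hQc : ∀ q' ∈ {q' | ∃ x ∈ ({q} : Set Proc), Star Tr τ x q'}, ¬ SatD Tr τ q' χ := by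
        rintro q' ⟨x, hx, hstar⟩ hχ'
        rw [Set.mem_singleton_iff] at hx
        exact hq ⟨q', hx ▸ hstar, hχ'⟩
      have hwin := win_procrastinate hpp' (winE χ p' _ hχ hQc)
      simp only [exprC]
      set e : Energy := exprE χ ⊔ onlyAt 5 (exprE χ 0) with he
      have hdef : ∀ k, minU16 k = UpdComp.decr → e k ≠ 0 := by
        intro k hk
        by_cases h0 : k = 0 <;> simp [minU16, h0] at hk
      refine attack' (fun h => h) (GMove.posConjunct rfl) (upd_eq_of _ _ hdef) ?_ hwin
      intro k
      rw [updFun_minU16]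
      by_cases hk : k = 0
      · subst hk
        rw [if_pos rfl]
        refine le_inf ((le_sup_left (b := onlyAt 5 (exprE χ 0))) 0) ?_
        refine le_trans ?_ ((le_sup_right (a := exprE χ)) 5)
        simp [onlyAt]
      · rw [if_neg hk]
        exact (le_sup_left (b := onlyAt 5 (exprE χ 0))) k
  | neg χ =>
      simp only [SatC, not_not] at hp hq
      obtain ⟨q', hqq', hχ⟩ := hq
      have hpq : p ≠ q := fun h => hp (h ▸ ⟨q', hqq', hχ⟩)
      have hPc : ∀ p'' ∈ {p'' | ∃ x ∈ ({p} : Set Proc), Star Tr τ x p''}, ¬ SatD Tr τ p'' χ := by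
        rintro p'' ⟨x, hx, hstar⟩ hχ'
        rw [Set.mem_singleton_iff] at hx
        exact hp ⟨p'', hx ▸ hstar, hχ'⟩
      have hwin := win_procrastinate hqq' (winE χ q' _ hχ hPc)
      simp only [exprC]
      set e : Energy := (unitE 7 + exprE χ) ⊔ onlyAt 6 (exprE χ 0) with he
      have he7 : 1 + exprE χ 7 ≤ e 7 := by
        refine le_trans ?_ ((le_sup_left (b := onlyAt 6 (exprE χ 0))) 7)
        simp [unitE]
      have hdef : ∀ k, minU17dec8 k = UpdComp.decr → e k ≠ 0 := by
        intro k hk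
        have hk7 : k = 7 := by
          by_cases h0 : k = 0 <;> by_cases h7 : k = 7 <;>
            simp [minU17dec8, h0, h7] at hk
          exact h7
        subst hk7
        intro hc
        rw [hc] at he7
        exact one_add_ne_zero' (exprE χ 7) (le_antisymm (le_trans he7 zero_le) zero_le)
      refine attack' (fun h => h) (GMove.negConjunct rfl hpq) (upd_eq_of _ _ hdef) ?_ hwin
      intro k
      rw [updFun_minU17dec8]
      by_cases hk : k = 0
      · subst hk
        rw [if_pos rfl]
        refine le_inf ?_ ?_
        · refine le_trans ?_ ((le_sup_left (b := onlyAt 6 (exprE χ 0))) 0)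
          simp [unitE]
        · refine le_trans ?_ ((le_sup_right (a := unitE 7 + exprE χ)) 6)
          simp [onlyAt]
      · rw [if_neg hk]
        by_cases hk7 : k = 7
        · subst hk7
          rw [if_pos rfl]
          exact le_tsub_one he7
        · rw [if_neg hk7]
          refine le_trans ?_ ((le_sup_left (b := onlyAt 6 (exprE χ 0))) k)
          simp [unitE, hk7]

end

end Main
/-- if the conjunct `ψ` distinguishes `p` from `q` (w.r.t.
`⟦·⟧^∧`), then `expr^∧(ψ)` is attacker-winning at `[p,q]^∧_a`. -/
theorem distinction_price_in_win_conjunct {Proc Act : Type} (Tr : Proc → Act → Proc → Prop)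
    (τ : Act) (ψ : Conjunct Act τ) (p q : Proc)
    (h : DistinguishesC Tr τ ψ p q) :
    (specGame Tr τ).Win (.attC p q) (exprC ψ) := by
  exact winC ψ p q h.1 h.2


end Spectroscopy
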